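/- Let G be a compact topological group with Haar probability measure ν, E a real Banach space, and λ : G → L(E,E) a continuous unital pseudo-representation with c(λ) < 1. Then the multiplicative average λ̄ satisfies, for all g', g ∈ G, ‖λ̄(g'g) − λ̄(g')∘λ̄(g)‖ ≤ 2·c(λ)²·b(λ)²/[1−c(λ)]²; in particular c(λ̄) ≤ 2·c(λ)²·b(λ)²/[1−c(λ)]². -/

import Mathlib

open MeasureTheory

/-- A continuous function from a compact space into a normed group is integrable with respect to
any finite measure. -/
lemma continuous_integrable_of_compactSpace {G : Type*} [TopologicalSpace G] [CompactSpace G]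
    [MeasurableSpace G] [OpensMeasurableSpace G] [Nonempty G] {A : Type*} [NormedAddCommGroup A]
    (ν : Measure G) [IsFiniteMeasure ν] {f : G → A} (hf : Continuous f) : Integrable f ν := by
  borelize A
  have sm : StronglyMeasurable f :=
    hf.stronglyMeasurable_of_support_subset_isCompact isCompact_univ (Set.subset_univ _)
  obtain ⟨x, hx⟩ := hf.norm.exists_forall_ge (by rw [Filter.cocompact_eq_bot]; exact Filter.tendsto_bot)
  exact ⟨sm.aestronglyMeasurable,
    HasFiniteIntegral.of_bounded (C := ‖f x‖) (ae_of_all _ fun y => hx y)⟩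

/-- Each value of a unital pseudo-representation with multiplicativity defect `C < 1` is
invertible, with inverse of norm at most `(1 - C)⁻¹ * B`. -/
lemma lam_isUnit {G : Type*} [Group G] {E : Type*} [NormedAddCommGroup E] [NormedSpace ℝ E]
    [CompleteSpace E] (lam : G → E →L[ℝ] E)
    (hunital : lam 1 = ContinuousLinearMap.id ℝ E)
    (B : ℝ) (hB : ∀ h : G, ‖lam h‖ ≤ B)
    (C : ℝ) (hC : ∀ g' g : G, ‖lam (g' * g) - (lam g').comp (lam g)‖ ≤ C)
    (hC1 : C < 1) (k : G) :
    IsUnit (lam k) ∧ ‖Ring.inverse (lam k)‖ ≤ (1 - C)⁻¹ * B := by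
  have hC' : ∀ a b : G, ‖lam (a * b) - lam a * lam b‖ ≤ C := fun a b => by
    rw [ContinuousLinearMap.mul_def]; exact hC a b
  have hone : lam 1 = (1 : E →L[ℝ] E) := by rw [hunital, ContinuousLinearMap.one_def]
  have h1C : (0:ℝ) < 1 - C := by
    have := le_trans (norm_nonneg _) (hC' 1 1); linarith
  have hp : ‖1 - lam k⁻¹ * lam k‖ ≤ C := by
    have := hC' k⁻¹ k; rwa [inv_mul_cancel, hone] at this
  have hq : ‖1 - lam k * lam k⁻¹‖ ≤ C := by
    have := hC' k k⁻¹; rwa [mul_inv_cancel, hone] at this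
  have hplt : ‖1 - lam k⁻¹ * lam k‖ < 1 := lt_of_le_of_lt hp hC1
  have hqlt : ‖1 - lam k * lam k⁻¹‖ < 1 := lt_of_le_of_lt hq hC1
  have hpu : IsUnit (lam k⁻¹ * lam k) := by
    have := isUnit_one_sub_of_norm_lt_one hplt
    rwa [sub_sub_cancel] at this
  have hqu : IsUnit (lam k * lam k⁻¹) := by
    have := isUnit_one_sub_of_norm_lt_one hqlt
    rwa [sub_sub_cancel] at this
  have hkey : Ring.inverse (lam k⁻¹ * lam k) * lam k⁻¹
      = lam k⁻¹ * Ring.inverse (lam k * lam k⁻¹) := by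
    calc Ring.inverse (lam k⁻¹ * lam k) * lam k⁻¹
        = Ring.inverse (lam k⁻¹ * lam k) * lam k⁻¹
            * ((lam k * lam k⁻¹) * Ring.inverse (lam k * lam k⁻¹)) := by
          rw [Ring.mul_inverse_cancel _ hqu, mul_one]
      _ = Ring.inverse (lam k⁻¹ * lam k) * (lam k⁻¹ * lam k)
            * (lam k⁻¹ * Ring.inverse (lam k * lam k⁻¹)) := by
          simp only [mul_assoc]
      _ = lam k⁻¹ * Ring.inverse (lam k * lam k⁻¹) := by
          rw [Ring.inverse_mul_cancel _ hpu, one_mul]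
  have hvi : lam k * (Ring.inverse (lam k⁻¹ * lam k) * lam k⁻¹) = 1 := by
    rw [hkey, ← mul_assoc, Ring.mul_inverse_cancel _ hqu]
  have hiv : (Ring.inverse (lam k⁻¹ * lam k) * lam k⁻¹) * lam k = 1 := by
    rw [mul_assoc, Ring.inverse_mul_cancel _ hpu]
  let u : (E →L[ℝ] E)ˣ := ⟨lam k, Ring.inverse (lam k⁻¹ * lam k) * lam k⁻¹, hvi, hiv⟩
  have hu : IsUnit (lam k) := ⟨u, rfl⟩
  refine ⟨hu, ?_⟩
  have hinv_eq : Ring.inverse (lam k) = Ring.inverse (lam k⁻¹ * lam k) * lam k⁻¹ := by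
    rw [show lam k = (u : E →L[ℝ] E) from rfl, Ring.inverse_unit]; rfl
  have hRnorm : ‖Ring.inverse (lam k⁻¹ * lam k)‖ ≤ (1 - C)⁻¹ := by
    have heq : ∑' n : ℕ, (1 - lam k⁻¹ * lam k) ^ n = Ring.inverse (lam k⁻¹ * lam k) := by
      rw [geom_series_eq_inverse _ hplt, sub_sub_cancel]
    have hb := tsum_geometric_le_of_norm_lt_one _ hplt
    rw [heq] at hb
    have hone1 : ‖(1 : E →L[ℝ] E)‖ ≤ 1 := by
      rw [ContinuousLinearMap.one_def]; exact ContinuousLinearMap.norm_id_le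
    have hmono : (1 - ‖1 - lam k⁻¹ * lam k‖)⁻¹ ≤ (1 - C)⁻¹ := by
      apply inv_anti₀ h1C; linarith
    linarith
  calc ‖Ring.inverse (lam k)‖
      ≤ ‖Ring.inverse (lam k⁻¹ * lam k)‖ * ‖lam k⁻¹‖ := by
        rw [hinv_eq]; exact norm_mul_le _ _
    _ ≤ (1 - C)⁻¹ * B := by
        apply mul_le_mul hRnorm (hB _) (norm_nonneg _)
        positivity

/-- The multiplicative average of a pseudo-representation `λ` of a compact group `G`
on a Banach space `E`, relative to a (Haar probability) measure `ν`:
`λ̄(g) := ∫ λ(gk) ∘ λ(k)⁻¹ dν(k)` (Bochner integral). -/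
noncomputable def mulAvg {G : Type*} [Group G] [TopologicalSpace G]
    [MeasurableSpace G] {E : Type*} [NormedAddCommGroup E] [NormedSpace ℝ E]
    (ν : Measure G) (lam : G → E →L[ℝ] E) : G → E →L[ℝ] E :=
  fun g => ∫ k, (lam (g * k)).comp (lam k).inverse ∂ν

/-- The paper's estimate (6): averaging quadratically improves the
multiplicativity defect, `c(λ̄) ≤ 2 c(λ)² b(λ)² / (1 - c(λ))²`. -/
theorem mulAvg_multiplicativity_defect_bound
    {G : Type*} [Group G] [TopologicalSpace G] [IsTopologicalGroup G]
    [CompactSpace G] [MeasurableSpace G] [BorelSpace G]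
    (ν : Measure G) [ν.IsHaarMeasure] [IsProbabilityMeasure ν]
    {E : Type*} [NormedAddCommGroup E] [NormedSpace ℝ E] [CompleteSpace E]
    (lam : G → E →L[ℝ] E) (hcont : Continuous lam)
    (hunital : lam 1 = ContinuousLinearMap.id ℝ E)
    (B : ℝ) (hB : ∀ h : G, ‖lam h‖ ≤ B)
    (C : ℝ) (hC : ∀ g' g : G, ‖lam (g' * g) - (lam g').comp (lam g)‖ ≤ C)
    (hC1 : C < 1) :
    ∀ g' g : G,
      ‖mulAvg ν lam (g' * g) - (mulAvg ν lam g').comp (mulAvg ν lam g)‖ ≤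
        2 * C ^ 2 * B ^ 2 / (1 - C) ^ 2 := by
  intro g' g
  have hC' : ∀ a b : G, ‖lam (a * b) - lam a * lam b‖ ≤ C := fun a b => by
    rw [ContinuousLinearMap.mul_def]; exact hC a b
  have hC0 : (0:ℝ) ≤ C := le_trans (norm_nonneg _) (hC 1 1)
  have hB0 : (0:ℝ) ≤ B := le_trans (norm_nonneg _) (hB 1)
  have h1C : (0:ℝ) < 1 - C := by linarith
  set M : ℝ := (1 - C)⁻¹ * B with hM
  have hM0 : (0:ℝ) ≤ M := by positivity
  have hunit : ∀ k : G, IsUnit (lam k) := fun k =>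
    (lam_isUnit lam hunital B hB C hC hC1 k).1
  have hinv_le : ∀ k : G, ‖Ring.inverse (lam k)‖ ≤ M := fun k =>
    (lam_isUnit lam hunital B hB C hC hC1 k).2
  have hv_mul : ∀ k : G, lam k * Ring.inverse (lam k) = 1 := fun k =>
    Ring.mul_inverse_cancel _ (hunit k)
  have hv_mul' : ∀ k : G, Ring.inverse (lam k) * lam k = 1 := fun k =>
    Ring.inverse_mul_cancel _ (hunit k)
  -- continuity of the inverse map
  have hv_cont : Continuous fun k : G => Ring.inverse (lam k) := by
    rw [continuous_iff_continuousAt]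
    intro k
    have h := NormedRing.inverse_continuousAt (hunit k).unit
    rw [IsUnit.unit_spec] at h
    exact h.comp hcont.continuousAt
  -- integrability of everything in sight
  have hint : ∀ f : G → (E →L[ℝ] E), Continuous f → Integrable f ν := fun f hf =>
    continuous_integrable_of_compactSpace ν hf
  have hc1 : ∀ a : G, Continuous fun k : G => lam (a * k) * Ring.inverse (lam k) := fun a =>
    (hcont.comp (continuous_mul_left a)).mul hv_cont
  have hc2 : Continuous fun k : G => lam (g' * g * k) * Ring.inverse (lam (g * k)) :=
    (hcont.comp (continuous_mul_left (g' * g))).mul (hv_cont.comp (continuous_mul_left g))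
  -- rewriting the average in ring language
  have havg : ∀ a : G, mulAvg ν lam a = ∫ k, lam (a * k) * Ring.inverse (lam k) ∂ν := by
    intro a
    unfold mulAvg
    congr 1
    funext k
    rw [ContinuousLinearMap.mul_def, ← ContinuousLinearMap.ringInverse_eq_inverse]
  -- the basic estimate : each `λ(ak) λ(k)⁻¹` is close to `λ(a)`
  have hnear : ∀ a k : G, ‖lam (a * k) * Ring.inverse (lam k) - lam a‖ ≤ C * M := by
    intro a k
    have hrw : lam (a * k) * Ring.inverse (lam k) - lam a
        = (lam (a * k) - lam a * lam k) * Ring.inverse (lam k) := by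
      rw [sub_mul, mul_assoc, hv_mul k, mul_one]
    rw [hrw]
    calc ‖(lam (a * k) - lam a * lam k) * Ring.inverse (lam k)‖
        ≤ ‖lam (a * k) - lam a * lam k‖ * ‖Ring.inverse (lam k)‖ := norm_mul_le _ _
      _ ≤ C * M := mul_le_mul (hC' a k) (hinv_le k) (norm_nonneg _) hC0
  -- hence `λ(ak) λ(k)⁻¹` is `2CM`-close to the average
  have hTnear : ∀ k : G,
      ‖lam (g * k) * Ring.inverse (lam k) - mulAvg ν lam g‖ ≤ 2 * (C * M) := by
    intro k
    have h1 : ‖lam g - mulAvg ν lam g‖ ≤ C * M := by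
      have heq : lam g - mulAvg ν lam g
          = ∫ h, (lam g - lam (g * h) * Ring.inverse (lam h)) ∂ν := by
        rw [integral_sub (integrable_const _) (hint _ (hc1 g)), integral_const, probReal_univ,
          one_smul, havg g]
      rw [heq]
      have hb : ∀ h : G, ‖lam g - lam (g * h) * Ring.inverse (lam h)‖ ≤ C * M := fun h => by
        rw [norm_sub_rev]; exact hnear g h
      calc ‖∫ h, (lam g - lam (g * h) * Ring.inverse (lam h)) ∂ν‖
          ≤ C * M * (ν Set.univ).toReal :=
            norm_integral_le_of_norm_le_const (ae_of_all _ hb)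
        _ = C * M := by simp [measure_univ]
    have h2 : lam (g * k) * Ring.inverse (lam k) - mulAvg ν lam g
        = (lam (g * k) * Ring.inverse (lam k) - lam g) + (lam g - mulAvg ν lam g) := by abel
    rw [h2]
    calc ‖(lam (g * k) * Ring.inverse (lam k) - lam g) + (lam g - mulAvg ν lam g)‖
        ≤ ‖lam (g * k) * Ring.inverse (lam k) - lam g‖ + ‖lam g - mulAvg ν lam g‖ :=
          norm_add_le _ _
      _ ≤ C * M + C * M := add_le_add (hnear g k) h1
      _ = 2 * (C * M) := by ring
  -- the main algebraic identity
  have hsub : mulAvg ν lam g' = ∫ k, lam (g' * (g * k)) * Ring.inverse (lam (g * k)) ∂ν := by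
    rw [havg g']
    exact (integral_mul_left_eq_self (fun h => lam (g' * h) * Ring.inverse (lam h)) g).symm
  have hcomp : (mulAvg ν lam g').comp (mulAvg ν lam g)
      = ∫ k, (lam (g' * (g * k)) * Ring.inverse (lam (g * k))) * mulAvg ν lam g ∂ν := by
    rw [← ContinuousLinearMap.mul_def, hsub]
    have hcφ : Continuous fun k : G => lam (g' * (g * k)) * Ring.inverse (lam (g * k)) :=
      (hcont.comp ((continuous_mul_left g').comp (continuous_mul_left g))).mul
        (hv_cont.comp (continuous_mul_left g))
    have := ((ContinuousLinearMap.compL ℝ E E E).flip (mulAvg ν lam g)).integral_comp_comm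
      (hint _ hcφ)
    exact this.symm
  have hzero : ∫ k, lam g' * (lam (g * k) * Ring.inverse (lam k) - mulAvg ν lam g) ∂ν = 0 := by
    have hcψ : Continuous fun k : G =>
        lam (g * k) * Ring.inverse (lam k) - mulAvg ν lam g :=
      (hc1 g).sub continuous_const
    have hL := ((ContinuousLinearMap.compL ℝ E E E) (lam g')).integral_comp_comm (hint _ hcψ)
    have hψ : ∫ k, (lam (g * k) * Ring.inverse (lam k) - mulAvg ν lam g) ∂ν = 0 := by
      rw [integral_sub (hint _ (hc1 g)) (integrable_const _), integral_const, probReal_univ,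
        one_smul, havg g, sub_self]
    calc ∫ k, lam g' * (lam (g * k) * Ring.inverse (lam k) - mulAvg ν lam g) ∂ν
        = lam g' * ∫ k, (lam (g * k) * Ring.inverse (lam k) - mulAvg ν lam g) ∂ν := hL
      _ = 0 := by rw [hψ, mul_zero]
  have hFk : ∀ k : G,
      (lam (g' * g * k) * Ring.inverse (lam (g * k)) - lam g')
          * (lam (g * k) * Ring.inverse (lam k) - mulAvg ν lam g)
        = (lam (g' * g * k) * Ring.inverse (lam k)
            - (lam (g' * (g * k)) * Ring.inverse (lam (g * k))) * mulAvg ν lam g)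
          - lam g' * (lam (g * k) * Ring.inverse (lam k) - mulAvg ν lam g) := by
    intro k
    have hassoc : g' * (g * k) = g' * g * k := (mul_assoc g' g k).symm
    rw [hassoc]
    have expand : (lam (g' * g * k) * Ring.inverse (lam (g * k)) - lam g')
          * (lam (g * k) * Ring.inverse (lam k) - mulAvg ν lam g)
        = lam (g' * g * k) * (Ring.inverse (lam (g * k)) * lam (g * k))
            * Ring.inverse (lam k)
          - (lam (g' * g * k) * Ring.inverse (lam (g * k))) * mulAvg ν lam g
          - lam g' * (lam (g * k) * Ring.inverse (lam k) - mulAvg ν lam g) := by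
      noncomm_ring
    rw [expand, hv_mul' (g * k), mul_one]
  have hintd : Integrable (fun k => lam (g' * g * k) * Ring.inverse (lam k)) ν :=
    hint _ (hc1 (g' * g))
  have hintφT : Integrable
      (fun k => (lam (g' * (g * k)) * Ring.inverse (lam (g * k))) * mulAvg ν lam g) ν := by
    apply hint
    exact ((hcont.comp ((continuous_mul_left g').comp (continuous_mul_left g))).mul
      (hv_cont.comp (continuous_mul_left g))).mul continuous_const
  have hintψ : Integrable
      (fun k => lam g' * (lam (g * k) * Ring.inverse (lam k) - mulAvg ν lam g)) ν := by
    apply hint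
    exact continuous_const.mul ((hc1 g).sub continuous_const)
  have hId : mulAvg ν lam (g' * g) - (mulAvg ν lam g').comp (mulAvg ν lam g)
      = ∫ k, (lam (g' * g * k) * Ring.inverse (lam (g * k)) - lam g')
          * (lam (g * k) * Ring.inverse (lam k) - mulAvg ν lam g) ∂ν := by
    have hintA : Integrable (fun k => lam (g' * g * k) * Ring.inverse (lam k)
        - lam (g' * (g * k)) * Ring.inverse (lam (g * k)) * mulAvg ν lam g) ν :=
      hintd.sub hintφT
    rw [integral_congr_ae (ae_of_all _ hFk),
      integral_sub hintA hintψ, integral_sub hintd hintφT, hzero, sub_zero,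
      havg (g' * g), hcomp]
  rw [hId]
  have hbd : ∀ k : G, ‖(lam (g' * g * k) * Ring.inverse (lam (g * k)) - lam g')
      * (lam (g * k) * Ring.inverse (lam k) - mulAvg ν lam g)‖ ≤ (C * M) * (2 * (C * M)) := by
    intro k
    have h1 : ‖lam (g' * g * k) * Ring.inverse (lam (g * k)) - lam g'‖ ≤ C * M := by
      have := hnear g' (g * k)
      rwa [← mul_assoc] at this
    calc ‖(lam (g' * g * k) * Ring.inverse (lam (g * k)) - lam g')
          * (lam (g * k) * Ring.inverse (lam k) - mulAvg ν lam g)‖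
        ≤ ‖lam (g' * g * k) * Ring.inverse (lam (g * k)) - lam g'‖
            * ‖lam (g * k) * Ring.inverse (lam k) - mulAvg ν lam g‖ := norm_mul_le _ _
      _ ≤ (C * M) * (2 * (C * M)) := by
          apply mul_le_mul h1 (hTnear k) (norm_nonneg _)
          positivity
  calc ‖∫ k, (lam (g' * g * k) * Ring.inverse (lam (g * k)) - lam g')
        * (lam (g * k) * Ring.inverse (lam k) - mulAvg ν lam g) ∂ν‖
      ≤ (C * M) * (2 * (C * M)) * (ν Set.univ).toReal :=
        norm_integral_le_of_norm_le_const (ae_of_all _ hbd)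
    _ = (C * M) * (2 * (C * M)) := by simp [measure_univ]
    _ = 2 * C ^ 2 * B ^ 2 / (1 - C) ^ 2 := by
        rw [hM]
        field_simp
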